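/- If a word (finite or infinite) contains an occurrence of the circular formula C_i for some i ≥ 1, then it contains a conjugacy class of length at least i, i.e., there is a finite word u with |u| ≥ i such that every cyclic conjugate of u is a factor of the word. Consequently, a word avoiding every conjugacy class of length at least i avoids every circular formula C_t with t ≥ i. -/
import Mathlib


/-- `u` is a factor of the infinite word `x`. -/
def IsFactorOfInf {α : Type*} (u : List α) (x : ℕ → α) : Prop :=
  ∃ i : ℕ, u = (List.range u.length).map fun j => x (i + j)

/-- The `i`-th fragment `A_i A_{i+1} … A_{i+t}` of the circular formula `C_t`,
as the list of variable indices (taken modulo `t`), of length `t + 1`. -/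
def circFragment (t i : ℕ) : List ℕ :=
  (List.range (t + 1)).map fun j => (i + j) % t

/-- `h` is an occurrence of the circular formula `C_t` in the infinite word `x`. -/
def CircOcc {α : Type*} (t : ℕ) (h : ℕ → List α) (x : ℕ → α) : Prop :=
  (∀ v < t, h v ≠ []) ∧ ∀ i < t, IsFactorOfInf ((circFragment t i).flatMap h) x

/-- `h` is an occurrence of the circular formula `C_t` in the finite word `w`. -/
def CircOccFin {α : Type*} (t : ℕ) (h : ℕ → List α) (w : List α) : Prop :=
  (∀ v < t, h v ≠ []) ∧ ∀ i < t, ((circFragment t i).flatMap h) <:+: w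

lemma frag_eq {α : Type*} (t i : ℕ) (hit : i < t) (h : ℕ → List α) :
    (circFragment t i).flatMap h =
      h i ++ (List.range (t - i - 1)).flatMap (fun j => h (i + 1 + j))
        ++ (List.range i).flatMap h ++ h i := by
  obtain ⟨k, hk⟩ : ∃ k, t = i + 1 + k := ⟨t - i - 1, by omega⟩
  subst hk
  have hki : i + 1 + k - i - 1 = k := by omega
  rw [circFragment, List.flatMap_map, hki]
  have hsum : i + 1 + k + 1 = (1 + k) + (i + 1) := by omega
  rw [hsum, List.range_add, List.flatMap_append, List.flatMap_map]
  have hA : (List.range (1 + k)).flatMap (fun j => h ((i + j) % (i + 1 + k)))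
      = h i ++ (List.range k).flatMap (fun j => h (i + 1 + j)) := by
    rw [show (1 + k : ℕ) = 1 + k from rfl, List.range_add, List.flatMap_append,
      List.flatMap_map]
    congr 1
    · show (List.range 1).flatMap _ = _
      simp only [List.range_succ, List.range_zero, List.nil_append, List.flatMap_cons, List.flatMap_nil, List.append_nil,
        Nat.add_zero, Nat.mod_eq_of_lt (show i < i + 1 + k by omega)]
    · apply List.flatMap_congr
      intro a ha
      simp only [List.mem_range] at ha
      rw [show i + (1 + a) = i + 1 + a by omega, Nat.mod_eq_of_lt (by omega)]
  have hB : (List.range (i + 1)).flatMap (fun a => h ((i + (1 + k + a)) % (i + 1 + k)))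
      = (List.range i).flatMap h ++ h i := by
    rw [List.range_succ, List.flatMap_append]
    congr 1
    · apply List.flatMap_congr
      intro a ha
      simp only [List.mem_range] at ha
      have h1 : i + (1 + k + a) = (i + 1 + k) + a := by omega
      rw [h1, Nat.add_mod_left, Nat.mod_eq_of_lt (by omega)]
    · have h1 : i + (1 + k + i) = (i + 1 + k) + i := by omega
      simp only [List.flatMap_cons, List.flatMap_nil, List.append_nil, h1,
        Nat.add_mod_left, Nat.mod_eq_of_lt (show i < i + 1 + k by omega)]
  rw [hA, hB]
  simp [List.append_assoc]

lemma flatten_split {α : Type*} : ∀ (L : List (List α)) (z v : List α), v ≠ [] →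
    L.flatten = z ++ v →
    ∃ i, ∃ hi : i < L.length, ∃ p s, L[i] = p ++ s ∧
      z = (L.take i).flatten ++ p ∧ v = s ++ (L.drop (i+1)).flatten := by
  intro L
  induction L with
  | nil =>
    intro z v hv h
    simp only [List.flatten_nil] at h
    exact absurd (List.append_eq_nil_iff.mp h.symm).2 hv
  | cons b L ih =>
    intro z v hv h
    simp only [List.flatten_cons] at h
    rcases List.append_eq_append_iff.mp h with ⟨a', hz, hf⟩ | ⟨c', hb, hv'⟩
    · obtain ⟨i, hi, p, s, h1, h2, h3⟩ := ih a' v hv hf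
      refine ⟨i+1, by simpa using Nat.succ_lt_succ hi, p, s, by simpa using h1, ?_, ?_⟩
      · simp [hz, h2, List.append_assoc]
      · simpa using h3
    · exact ⟨0, by simp, z, c', by simpa using hb, by simp, by simpa using hv'⟩

lemma conj_key {α : Type*} (t : ℕ) (ht : 1 ≤ t) (h : ℕ → List α)
    (z v : List α) (hu : (List.range t).flatMap h = z ++ v) :
    ∃ j, j < t ∧ (v ++ z) <:+: (circFragment t j).flatMap h := by
  by_cases hv : v = []
  · subst hv
    rw [List.append_nil] at hu
    refine ⟨0, ht, ?_⟩
    rw [frag_eq t 0 ht h]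
    refine ⟨[], h 0, ?_⟩
    rw [List.nil_append, ← hu]
    have h1 : t = 1 + (t - 1) := by omega
    conv_lhs => rw [h1, List.range_add, List.flatMap_append, List.flatMap_map]
    simp [List.append_assoc, show List.range 1 = [0] by rfl]
  · set L := (List.range t).map h with hL
    have hLf : L.flatten = z ++ v := by
      rw [hL, ← List.flatMap_def, hu]
    obtain ⟨i, hi, p, s, hsplit, hz, hv'⟩ := flatten_split L z v hv hLf
    have hit : i < t := by simpa [hL] using hi
    have hbi : L[i] = h i := by
      simp [hL]
    rw [hbi] at hsplit
    have htake : (L.take i).flatten = (List.range i).flatMap h := by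
      rw [hL, ← List.map_take, List.take_range, Nat.min_eq_left hit.le, List.flatMap_def]
    have hdrop : (L.drop (i+1)).flatten
        = (List.range (t - i - 1)).flatMap (fun j => h (i + 1 + j)) := by
      have h1 : t = (i + 1) + (t - i - 1) := by omega
      conv_lhs => rw [hL, h1, List.range_add, List.map_append,
        List.drop_left' (by simp), ← List.flatMap_def, List.flatMap_map]
    refine ⟨i, hit, p, s, ?_⟩
    rw [frag_eq t i hit h, hsplit, hv', hz, htake, hdrop]
    simp [List.append_assoc]

lemma len_key {α : Type*} (t : ℕ) (h : ℕ → List α) (hne : ∀ v < t, h v ≠ []) :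
    t ≤ ((List.range t).flatMap h).length := by
  rw [List.length_flatMap]
  calc t = ((List.range t).map (fun _ => 1)).sum := by
        simp [List.map_const']
    _ ≤ _ := by
        apply List.sum_le_sum
        intro j hj
        simp only [List.mem_range] at hj
        simpa [Nat.one_le_iff_ne_zero, List.length_eq_zero_iff] using hne j hj

lemma factor_of_infix {α : Type*} {u' u : List α} {x : ℕ → α}
    (hinf : u' <:+: u) (hf : IsFactorOfInf u x) : IsFactorOfInf u' x := by
  obtain ⟨a, b, rfl⟩ := hinf
  obtain ⟨i, hi⟩ := hf
  refine ⟨i + a.length, ?_⟩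
  apply List.ext_getElem (by simp)
  intro n h1 h2
  simp only [List.getElem_map, List.getElem_range]
  have hk : a.length + n < (a ++ u' ++ b).length := by
    simp only [List.length_append]; omega
  have key : (a ++ u' ++ b)[a.length + n]? = some (x (i + (a.length + n))) := by
    rw [hi]
    rw [List.getElem?_map]
    rw [List.getElem?_range (by simpa using hk)]
    rfl
  rw [List.append_assoc, List.getElem?_append_right (Nat.le_add_right _ _),
    Nat.add_sub_cancel_left, List.getElem?_append_left h1,
    List.getElem?_eq_getElem h1] at key
  rw [Option.some.injEq] at key
  rw [key, Nat.add_assoc]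

lemma main_key {α : Type*} (t : ℕ) (ht : 1 ≤ t) (h : ℕ → List α)
    (hne : ∀ v < t, h v ≠ []) :
    ∃ u : List α, t ≤ u.length ∧ ∀ v z : List α, u = z ++ v →
      ∃ j, j < t ∧ (v ++ z) <:+: (circFragment t j).flatMap h :=
  ⟨(List.range t).flatMap h, len_key t h hne, fun v z huz => conj_key t ht h z v huz⟩

/-- If a word (finite or infinite) contains an occurrence of the circular
formula `C_i` with `i ≥ 1`, then it contains a conjugacy class of length at
least `i`: some word `u` with `|u| ≥ i` has all of its cyclic conjugates as
factors.  Consequently, a word avoiding every conjugacy class of length at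
least `i` avoids every circular formula `C_t` with `t ≥ i`. -/
theorem stmt_6 {α : Type*} (i : ℕ) (hi : 1 ≤ i) :
    (∀ w : List α, (∃ h : ℕ → List α, CircOccFin i h w) →
      ∃ u : List α, i ≤ u.length ∧ ∀ v z : List α, u = z ++ v → (v ++ z) <:+: w) ∧
    (∀ x : ℕ → α, (∃ h : ℕ → List α, CircOcc i h x) →
      ∃ u : List α, i ≤ u.length ∧ ∀ v z : List α, u = z ++ v → IsFactorOfInf (v ++ z) x) ∧
    (∀ w : List α,
      (¬ ∃ u : List α, i ≤ u.length ∧ ∀ v z : List α, u = z ++ v → (v ++ z) <:+: w) →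
      ∀ t, i ≤ t → ¬ ∃ h : ℕ → List α, CircOccFin t h w) ∧
    (∀ x : ℕ → α,
      (¬ ∃ u : List α, i ≤ u.length ∧ ∀ v z : List α, u = z ++ v → IsFactorOfInf (v ++ z) x) →
      ∀ t, i ≤ t → ¬ ∃ h : ℕ → List α, CircOcc t h x) := by
  have finCase : ∀ (t : ℕ), 1 ≤ t → ∀ (w : List α),
      (∃ h : ℕ → List α, CircOccFin t h w) →
      ∃ u : List α, t ≤ u.length ∧ ∀ v z : List α, u = z ++ v → (v ++ z) <:+: w := by
    intro t ht w ⟨h, hne, hfrag⟩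
    obtain ⟨u, hlen, hconj⟩ := main_key t ht h hne
    refine ⟨u, hlen, fun v z hvz => ?_⟩
    obtain ⟨j, hj, hinf⟩ := hconj v z hvz
    exact hinf.trans (hfrag j hj)
  have infCase : ∀ (t : ℕ), 1 ≤ t → ∀ (x : ℕ → α),
      (∃ h : ℕ → List α, CircOcc t h x) →
      ∃ u : List α, t ≤ u.length ∧ ∀ v z : List α, u = z ++ v →
        IsFactorOfInf (v ++ z) x := by
    intro t ht x ⟨h, hne, hfrag⟩
    obtain ⟨u, hlen, hconj⟩ := main_key t ht h hne
    refine ⟨u, hlen, fun v z hvz => ?_⟩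
    obtain ⟨j, hj, hinf⟩ := hconj v z hvz
    exact factor_of_infix hinf (hfrag j hj)
  refine ⟨finCase i hi, infCase i hi, ?_, ?_⟩
  · intro w hno t hit hocc
    apply hno
    obtain ⟨u, hlen, hconj⟩ := finCase t (hi.trans hit) w hocc
    exact ⟨u, hit.trans hlen, hconj⟩
  · intro x hno t hit hocc
    apply hno
    obtain ⟨u, hlen, hconj⟩ := infCase t (hi.trans hit) x hocc
    exact ⟨u, hit.trans hlen, hconj⟩
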